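/- arXiv:1105.4906 — 4 statements merged into one kernel-verified Lean document; each statement's English description precedes it below -/
import Mathlib

section
/- For σ ∈ S_N define A_σ(ξ) = ∏_{(k,ℓ) inversion of σ} S(ξ_k,ξ_ℓ) with S(ξ,ξ') = -(p+qξξ'-ξ)/(p+qξξ'-ξ'). Then A_σ satisfies the ASEP boundary relation: for every i, (p + q·ξ_{σ(i)}ξ_{σ(i+1)} - ξ_{σ(i+1)})·A_σ(ξ) + (p + q·ξ_{σ(i)}ξ_{σ(i+1)} - ξ_{σ(i)})·A_{T_iσ}(ξ) = 0, provided all denominators are nonzero. -/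
open Finset

-- order lemma for adjacent swap
lemma swap_lt_iff {N : ℕ} (i j x y : Fin N) (hj : (j : ℕ) = (i : ℕ) + 1)
    (h1 : ¬(x = i ∧ y = j)) (h2 : ¬(x = j ∧ y = i)) :
    Equiv.swap i j x < Equiv.swap i j y ↔ x < y := by
  simp only [Equiv.swap_apply_def]
  split_ifs <;> simp only [Fin.lt_def, Fin.ext_iff, not_and] at * <;> omega

lemma symm_mul_swap {N : ℕ} (σ : Equiv.Perm (Fin N)) (i j k : Fin N) :
    (σ * Equiv.swap i j).symm k = Equiv.swap i j (σ.symm k) := by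
  simp [Equiv.symm_apply_eq, Equiv.swap_apply_self]

lemma set_split {N : ℕ} (σ : Equiv.Perm (Fin N)) (i j : Fin N)
    (hj : (j : ℕ) = (i : ℕ) + 1) (h : σ j < σ i) :
    (Finset.univ.filter
      (fun pr : Fin N × Fin N => pr.2 < pr.1 ∧ σ.symm pr.1 < σ.symm pr.2))
    = insert (σ i, σ j)
      (Finset.univ.filter
        (fun pr : Fin N × Fin N => pr.2 < pr.1 ∧
          (σ * Equiv.swap i j).symm pr.1 < (σ * Equiv.swap i j).symm pr.2)) := by
  have hij : i < j := by simp [Fin.lt_def, hj]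
  ext pr
  simp only [Finset.mem_filter, Finset.mem_insert, Finset.mem_univ, true_and,
    symm_mul_swap, Prod.ext_iff]
  constructor
  · rintro ⟨h21, hab⟩
    by_cases hA : σ.symm pr.1 = i ∧ σ.symm pr.2 = j
    · left
      constructor
      · rw [← hA.1]; simp
      · rw [← hA.2]; simp
    by_cases hB : σ.symm pr.1 = j ∧ σ.symm pr.2 = i
    · exfalso; rw [hB.1, hB.2] at hab; exact absurd hab (not_lt.2 hij.le)
    · right
      exact ⟨h21, (swap_lt_iff i j _ _ hj hA hB).2 hab⟩
  · rintro (⟨h1, h2⟩ | ⟨h21, hab⟩)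
    · obtain ⟨p1, p2⟩ := pr
      simp only at h1 h2
      subst h1; subst h2
      exact ⟨h, by simpa using hij⟩
    · refine ⟨h21, ?_⟩
      by_cases hA : σ.symm pr.1 = i ∧ σ.symm pr.2 = j
      · exfalso
        rw [hA.1, hA.2, Equiv.swap_apply_left, Equiv.swap_apply_right] at hab
        exact absurd hab (not_lt.2 hij.le)
      by_cases hB : σ.symm pr.1 = j ∧ σ.symm pr.2 = i
      · exfalso
        have e1 : pr.1 = σ j := by rw [← hB.1]; simp
        have e2 : pr.2 = σ i := by rw [← hB.2]; simp
        rw [e1, e2] at h21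
        exact absurd h21 (not_lt.2 h.le)
      · exact (swap_lt_iff i j _ _ hj hA hB).1 hab

lemma not_mem_split {N : ℕ} (σ : Equiv.Perm (Fin N)) (i j : Fin N)
    (hj : (j : ℕ) = (i : ℕ) + 1) :
    (σ i, σ j) ∉ (Finset.univ.filter
        (fun pr : Fin N × Fin N => pr.2 < pr.1 ∧
          (σ * Equiv.swap i j).symm pr.1 < (σ * Equiv.swap i j).symm pr.2)) := by
  have hij : i < j := by simp [Fin.lt_def, hj]
  simp [symm_mul_swap, Equiv.swap_apply_left, Equiv.swap_apply_right, not_lt.2 hij.le]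

lemma Aprod {N : ℕ} (p q : ℂ) (ξ : Fin N → ℂ) (S : ℂ → ℂ → ℂ)
    (A : Equiv.Perm (Fin N) → ℂ)
    (hA : ∀ τ, A τ = ∏ pr ∈ Finset.univ.filter
        (fun pr : Fin N × Fin N => pr.2 < pr.1 ∧ τ.symm pr.1 < τ.symm pr.2),
        S (ξ pr.1) (ξ pr.2))
    (σ : Equiv.Perm (Fin N)) (i j : Fin N) (hj : (j : ℕ) = (i : ℕ) + 1)
    (h : σ j < σ i) :
    A σ = S (ξ (σ i)) (ξ (σ j)) * A (σ * Equiv.swap i j) := by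
  rw [hA σ, hA (σ * Equiv.swap i j), set_split σ i j hj h,
    Finset.prod_insert (not_mem_split σ i j hj)]

theorem stmt5 (N : ℕ) (p q : ℂ) (ξ : Fin N → ℂ) (S : ℂ → ℂ → ℂ)
    (hS : ∀ x x', S x x' = -(p + q * x * x' - x) / (p + q * x * x' - x'))
    (hden : ∀ k ℓ : Fin N, p + q * ξ k * ξ ℓ - ξ ℓ ≠ 0)
    (A : Equiv.Perm (Fin N) → ℂ)
    (hA : ∀ τ, A τ = ∏ pr ∈ Finset.univ.filter
        (fun pr : Fin N × Fin N => pr.2 < pr.1 ∧ τ.symm pr.1 < τ.symm pr.2),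
        S (ξ pr.1) (ξ pr.2))
    (σ : Equiv.Perm (Fin N)) (i j : Fin N) (hj : (j : ℕ) = (i : ℕ) + 1) :
    (p + q * ξ (σ i) * ξ (σ j) - ξ (σ j)) * A σ
      + (p + q * ξ (σ i) * ξ (σ j) - ξ (σ i)) * A (σ * Equiv.swap i j) = 0 := by
  rcases lt_trichotomy (σ i) (σ j) with hlt | heq | hgt
  · set σ' := σ * Equiv.swap i j with hσ'
    have hji : σ' j < σ' i := by
      simpa [hσ', Equiv.Perm.mul_apply] using hlt
    have hback : σ' * Equiv.swap i j = σ := by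
      rw [hσ', mul_assoc, Equiv.swap_mul_self, mul_one]
    have hprod := Aprod p q ξ S A hA σ' i j hj hji
    rw [hback] at hprod
    have e1 : σ' i = σ j := by simp [hσ', Equiv.Perm.mul_apply]
    have e2 : σ' j = σ i := by simp [hσ', Equiv.Perm.mul_apply]
    rw [e1, e2] at hprod
    rw [hprod, hS]
    have hd := hden (σ j) (σ i)
    have hd' : p + q * ξ (σ i) * ξ (σ j) - ξ (σ i) ≠ 0 := by
      rw [mul_right_comm q (ξ (σ i)) (ξ (σ j))]; exact hd
    field_simp
    ring
  · exfalso
    have : i = j := σ.injective heq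
    have : (i : ℕ) = (j : ℕ) := by rw [this]
    omega
  · have hprod := Aprod p q ξ S A hA σ i j hj hgt
    rw [hprod, hS]
    have hd := hden (σ i) (σ j)
    field_simp
    ring
end

section
/- Let H₀ be the set of functions h assigning to each species map π : {1,…,N} → {1,…,M} a function of ξ = (ξ_1,…,ξ_N), and let H = S_N × H₀. Define T_i : H → H by T_i(σ,h) = (T_iσ, h + (1 + S(ξ_{σ(i)},ξ_{σ(i+1)}))·[α_i·(h ∘ T_i) - β_i·h]), where (h∘T_i)(π) = h(T_iπ), α_i(π), β_i(π) are the multispecies ASEP rates, and S is the ASEP scattering factor. Then T_i ∘ T_i is the identity on H (wherever all denominators are nonzero). -/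
/-- T_i ∘ T_i = id on H = S_N × H₀ for the multispecies ASEP operators. -/
theorem stmt10 (N M : ℕ) (p q : ℂ) (hpq : p + q = 1)
    (S : ℂ → ℂ → ℂ)
    (hS : ∀ x x', S x x' = -(p + q * x * x' - x) / (p + q * x * x' - x'))
    (α β : Fin N → Fin N → (Fin N → Fin M) → ℂ)
    (hα : ∀ a b ρ, α a b ρ = if ρ a = ρ b then 0 else if ρ a < ρ b then p else q)
    (hβ : ∀ a b ρ, β a b ρ = if ρ a = ρ b then 0 else if ρ a < ρ b then q else p)
    (T : Fin N → Fin N →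
      Equiv.Perm (Fin N) × ((Fin N → Fin M) → (Fin N → ℂ) → ℂ) →
      Equiv.Perm (Fin N) × ((Fin N → Fin M) → (Fin N → ℂ) → ℂ))
    (hT : ∀ a b σ h, T a b (σ, h) =
      (σ * Equiv.swap a b, fun π ξ =>
        h π ξ + (1 + S (ξ (σ a)) (ξ (σ b))) *
          (α a b π * h (π ∘ Equiv.swap a b) ξ - β a b π * h π ξ)))
    (i j : Fin N) (hj : (j : ℕ) = (i : ℕ) + 1)
    (σ : Equiv.Perm (Fin N)) (h : (Fin N → Fin M) → (Fin N → ℂ) → ℂ) :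
    (T i j (T i j (σ, h))).1 = σ ∧
      ∀ (π : Fin N → Fin M) (ξ : Fin N → ℂ),
        (∀ a b : Fin N, p + q * ξ a * ξ b - ξ b ≠ 0) →
        (T i j (T i j (σ, h))).2 π ξ = h π ξ := by
  have hq : q = 1 - p := by linear_combination hpq
  subst hq
  constructor
  · rw [hT, hT]
    simp [mul_assoc]
  · intro π ξ hden
    have hss : (π ∘ ⇑(Equiv.swap i j)) ∘ ⇑(Equiv.swap i j) = π := by
      funext a; simp
    rw [hT, hT]
    simp only [Equiv.Perm.mul_apply, Equiv.swap_apply_left, Equiv.swap_apply_right,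
      hss, Function.comp_apply]
    set x := ξ (σ i) with hx
    set y := ξ (σ j) with hy
    have h1 : p + (1 - p) * x * y - y ≠ 0 := hden (σ i) (σ j)
    have h2 : p + (1 - p) * x * y - x ≠ 0 := by
      have := hden (σ j) (σ i)
      rw [show (1 - p) * y * x = (1 - p) * x * y by ring] at this
      exact this
    rw [hα, hα, hβ, hβ, hS x y, hS y x]
    rw [show (1 - p) * y * x = (1 - p) * x * y by ring]
    simp only [Function.comp_apply, Equiv.swap_apply_left, Equiv.swap_apply_right]
    by_cases hππ : π i = π j
    · simp [hππ]
    · have hππ' : ¬ π j = π i := fun e => hππ e.symm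
      by_cases hlt : π i < π j
      · have hlt' : ¬ π j < π i := not_lt_of_gt hlt
        simp only [hππ, hππ', hlt, hlt', if_false, if_true]
        field_simp
        ring
      · have hlt' : π j < π i := lt_of_le_of_ne (not_lt.mp hlt) hππ'
        simp only [hππ, hππ', hlt, hlt', if_false, if_true]
        field_simp
        ring
end

section
/- For N = 3, the multispecies ASEP operators T_1, T_2 on H = S_3 × H₀ satisfy the braid relation T_1 ∘ T_2 ∘ T_1 = T_2 ∘ T_1 ∘ T_2 (wherever all denominators are nonzero). -/
set_option maxHeartbeats 1000000 in
/-- The braid relation T₁T₂T₁ = T₂T₁T₂ for the multispecies ASEP operators with N = 3.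
Here T₁ acts at positions (0,1) and T₂ at positions (1,2) of `Fin 3`. -/
theorem stmt12 (M : ℕ) (p q : ℂ) (hpq : p + q = 1)
    (S : ℂ → ℂ → ℂ)
    (hS : ∀ x x', S x x' = -(p + q * x * x' - x) / (p + q * x * x' - x'))
    (α β : Fin 3 → Fin 3 → (Fin 3 → Fin M) → ℂ)
    (hα : ∀ a b ρ, α a b ρ = if ρ a = ρ b then 0 else if ρ a < ρ b then p else q)
    (hβ : ∀ a b ρ, β a b ρ = if ρ a = ρ b then 0 else if ρ a < ρ b then q else p)
    (T : Fin 3 → Fin 3 →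
      Equiv.Perm (Fin 3) × ((Fin 3 → Fin M) → (Fin 3 → ℂ) → ℂ) →
      Equiv.Perm (Fin 3) × ((Fin 3 → Fin M) → (Fin 3 → ℂ) → ℂ))
    (hT : ∀ a b σ h, T a b (σ, h) =
      (σ * Equiv.swap a b, fun π ξ =>
        h π ξ + (1 + S (ξ (σ a)) (ξ (σ b))) *
          (α a b π * h (π ∘ Equiv.swap a b) ξ - β a b π * h π ξ)))
    (σ : Equiv.Perm (Fin 3)) (h : (Fin 3 → Fin M) → (Fin 3 → ℂ) → ℂ) :
    (T 0 1 (T 1 2 (T 0 1 (σ, h)))).1 = (T 1 2 (T 0 1 (T 1 2 (σ, h)))).1 ∧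
      ∀ (π : Fin 3 → Fin M) (ξ : Fin 3 → ℂ),
        (∀ a b : Fin 3, p + q * ξ a * ξ b - ξ b ≠ 0) →
        (T 0 1 (T 1 2 (T 0 1 (σ, h)))).2 π ξ
          = (T 1 2 (T 0 1 (T 1 2 (σ, h)))).2 π ξ := by
  have hT' : ∀ a b x, T a b x = (x.1 * Equiv.swap a b, fun π ξ =>
        x.2 π ξ + (1 + S (ξ (x.1 a)) (ξ (x.1 b))) *
          (α a b π * x.2 (π ∘ Equiv.swap a b) ξ - β a b π * x.2 π ξ)) := by
    rintro a b ⟨s, f⟩; exact hT a b s f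
  constructor
  · simp only [hT']
    simp only [mul_assoc]
    congr 1
    decide
  · intro π ξ hne
    obtain rfl : q = 1 - p := by linear_combination hpq
    have e1 : (Equiv.swap (0:Fin 3) 1) 2 = 2 := by decide
    have e2 : (Equiv.swap (1:Fin 3) 2) 0 = 0 := by decide
    have c1 : ⇑(Equiv.swap (0:Fin 3) 1) ∘ ⇑(Equiv.swap (0:Fin 3) 1) = id := by decide
    have c2 : ⇑(Equiv.swap (1:Fin 3) 2) ∘ ⇑(Equiv.swap (1:Fin 3) 2) = id := by decide
    have c3 : ⇑(Equiv.swap (1:Fin 3) 2) ∘ ⇑(Equiv.swap (0:Fin 3) 1) ∘ ⇑(Equiv.swap (1:Fin 3) 2)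
        = ⇑(Equiv.swap (0:Fin 3) 1) ∘ ⇑(Equiv.swap (1:Fin 3) 2) ∘ ⇑(Equiv.swap (0:Fin 3) 1) := by
      decide
    have hxy := hne (σ 0) (σ 1)
    have hxz := hne (σ 0) (σ 2)
    have hyz := hne (σ 1) (σ 2)
    have hrel : 1 + S (ξ (σ 0)) (ξ (σ 2)) =
        (1 + S (ξ (σ 0)) (ξ (σ 1))) + (1 + S (ξ (σ 1)) (ξ (σ 2)))
          - (1 + S (ξ (σ 0)) (ξ (σ 1))) * (1 + S (ξ (σ 1)) (ξ (σ 2)))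
          + p * (1 - p) * ((1 + S (ξ (σ 0)) (ξ (σ 1))) *
              ((1 + S (ξ (σ 0)) (ξ (σ 2))) * (1 + S (ξ (σ 1)) (ξ (σ 2))))) := by
      rw [hS, hS, hS]
      rw [one_add_div hxy, one_add_div hxz, one_add_div hyz]
      rw [div_add_div _ _ hxy hyz, div_mul_div_comm, div_mul_div_comm, div_mul_div_comm, mul_div_assoc', div_sub_div _ _ (mul_ne_zero hxy hyz) (mul_ne_zero hxy hyz), div_add_div _ _ (mul_ne_zero (mul_ne_zero hxy hyz) (mul_ne_zero hxy hyz)) (mul_ne_zero hxy (mul_ne_zero hxz hyz)), div_eq_div_iff hxz (mul_ne_zero (mul_ne_zero (mul_ne_zero hxy hyz) (mul_ne_zero hxy hyz)) (mul_ne_zero hxy (mul_ne_zero hxz hyz)))]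
      ring
    simp only [hT', Equiv.Perm.mul_apply, Equiv.swap_apply_left, Equiv.swap_apply_right,
      Function.comp_assoc, e1, e2, c1, c2, c3, Function.comp_id,
      hα, hβ, Function.comp_apply, Fin.lt_def, ← Fin.val_eq_val]
    rcases Nat.lt_trichotomy (π 0).val (π 1).val with h01 | h01 | h01 <;>
      rcases Nat.lt_trichotomy (π 1).val (π 2).val with h12 | h12 | h12 <;>
      rcases Nat.lt_trichotomy (π 0).val (π 2).val with h02 | h02 | h02
    · simp only [h01, Nat.ne_of_lt h01, Nat.ne_of_gt h01, Nat.lt_asymm h01, h12, Nat.ne_of_lt h12, Nat.ne_of_gt h12, Nat.lt_asymm h12, h02, Nat.ne_of_lt h02, Nat.ne_of_gt h02, Nat.lt_asymm h02, if_true, if_false, ite_true, ite_false, not_false_iff]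
      linear_combination (((-1) * p : ℂ) * (h (π ∘ ⇑(Equiv.swap (0:Fin 3) 1)) ξ) + (p : ℂ) * (h (π ∘ ⇑(Equiv.swap (1:Fin 3) 2)) ξ)) * hrel
    · exfalso; omega
    · exfalso; omega
    · simp only [h01, Nat.ne_of_lt h01, Nat.ne_of_gt h01, Nat.lt_asymm h01, h12, lt_self_iff_false, eq_self_iff_true, h02, Nat.ne_of_lt h02, Nat.ne_of_gt h02, Nat.lt_asymm h02, if_true, if_false, ite_true, ite_false, not_false_iff]
      linear_combination ((1 + (-1) * p : ℂ) * (h π ξ) + ((-1) * p : ℂ) * (h (π ∘ ⇑(Equiv.swap (0:Fin 3) 1)) ξ)) * hrel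
    · exfalso; omega
    · exfalso; omega
    · simp only [h01, Nat.ne_of_lt h01, Nat.ne_of_gt h01, Nat.lt_asymm h01, h12, Nat.ne_of_lt h12, Nat.ne_of_gt h12, Nat.lt_asymm h12, h02, Nat.ne_of_lt h02, Nat.ne_of_gt h02, Nat.lt_asymm h02, if_true, if_false, ite_true, ite_false, not_false_iff]
      linear_combination ((1 + (-2) * p : ℂ) * (h π ξ) + ((-1) * p : ℂ) * (h (π ∘ ⇑(Equiv.swap (0:Fin 3) 1)) ξ) + (1 + (-1) * p : ℂ) * (h (π ∘ ⇑(Equiv.swap (1:Fin 3) 2)) ξ)) * hrel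
    · simp only [h01, Nat.ne_of_lt h01, Nat.ne_of_gt h01, Nat.lt_asymm h01, h12, Nat.ne_of_lt h12, Nat.ne_of_gt h12, Nat.lt_asymm h12, h02, lt_self_iff_false, eq_self_iff_true, if_true, if_false, ite_true, ite_false, not_false_iff]
      linear_combination ((1 + (-2) * p : ℂ) * (h π ξ) + ((-1) * p : ℂ) * (h (π ∘ ⇑(Equiv.swap (0:Fin 3) 1)) ξ) + (1 + (-1) * p : ℂ) * (h (π ∘ ⇑(Equiv.swap (1:Fin 3) 2)) ξ)) * hrel
    · simp only [h01, Nat.ne_of_lt h01, Nat.ne_of_gt h01, Nat.lt_asymm h01, h12, Nat.ne_of_lt h12, Nat.ne_of_gt h12, Nat.lt_asymm h12, h02, Nat.ne_of_lt h02, Nat.ne_of_gt h02, Nat.lt_asymm h02, if_true, if_false, ite_true, ite_false, not_false_iff]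
      linear_combination ((1 + (-2) * p : ℂ) * (h π ξ) + ((-1) * p : ℂ) * (h (π ∘ ⇑(Equiv.swap (0:Fin 3) 1)) ξ) + (1 + (-1) * p : ℂ) * (h (π ∘ ⇑(Equiv.swap (1:Fin 3) 2)) ξ)) * hrel
    · simp only [h01, lt_self_iff_false, eq_self_iff_true, h12, Nat.ne_of_lt h12, Nat.ne_of_gt h12, Nat.lt_asymm h12, h02, Nat.ne_of_lt h02, Nat.ne_of_gt h02, Nat.lt_asymm h02, if_true, if_false, ite_true, ite_false, not_false_iff]
      linear_combination (((-1) + p : ℂ) * (h π ξ) + (p : ℂ) * (h (π ∘ ⇑(Equiv.swap (1:Fin 3) 2)) ξ)) * hrel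
    · exfalso; omega
    · exfalso; omega
    · exfalso; omega
    · simp only [h01, lt_self_iff_false, eq_self_iff_true, h12, lt_self_iff_false, eq_self_iff_true, h02, lt_self_iff_false, eq_self_iff_true, if_true, if_false, ite_true, ite_false, not_false_iff]
      linear_combination ((0:ℂ)) * hrel
    · exfalso; omega
    · exfalso; omega
    · exfalso; omega
    · simp only [h01, lt_self_iff_false, eq_self_iff_true, h12, Nat.ne_of_lt h12, Nat.ne_of_gt h12, Nat.lt_asymm h12, h02, Nat.ne_of_lt h02, Nat.ne_of_gt h02, Nat.lt_asymm h02, if_true, if_false, ite_true, ite_false, not_false_iff]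
      linear_combination (((-1) * p : ℂ) * (h π ξ) + (1 + (-1) * p : ℂ) * (h (π ∘ ⇑(Equiv.swap (1:Fin 3) 2)) ξ)) * hrel
    · simp only [h01, Nat.ne_of_lt h01, Nat.ne_of_gt h01, Nat.lt_asymm h01, h12, Nat.ne_of_lt h12, Nat.ne_of_gt h12, Nat.lt_asymm h12, h02, Nat.ne_of_lt h02, Nat.ne_of_gt h02, Nat.lt_asymm h02, if_true, if_false, ite_true, ite_false, not_false_iff]
      linear_combination (((-1) + 2 * p : ℂ) * (h π ξ) + ((-1) + p : ℂ) * (h (π ∘ ⇑(Equiv.swap (0:Fin 3) 1)) ξ) + (p : ℂ) * (h (π ∘ ⇑(Equiv.swap (1:Fin 3) 2)) ξ)) * hrel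
    · simp only [h01, Nat.ne_of_lt h01, Nat.ne_of_gt h01, Nat.lt_asymm h01, h12, Nat.ne_of_lt h12, Nat.ne_of_gt h12, Nat.lt_asymm h12, h02, lt_self_iff_false, eq_self_iff_true, if_true, if_false, ite_true, ite_false, not_false_iff]
      linear_combination (((-1) + 2 * p : ℂ) * (h π ξ) + ((-1) + p : ℂ) * (h (π ∘ ⇑(Equiv.swap (0:Fin 3) 1)) ξ) + (p : ℂ) * (h (π ∘ ⇑(Equiv.swap (1:Fin 3) 2)) ξ)) * hrel
    · simp only [h01, Nat.ne_of_lt h01, Nat.ne_of_gt h01, Nat.lt_asymm h01, h12, Nat.ne_of_lt h12, Nat.ne_of_gt h12, Nat.lt_asymm h12, h02, Nat.ne_of_lt h02, Nat.ne_of_gt h02, Nat.lt_asymm h02, if_true, if_false, ite_true, ite_false, not_false_iff]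
      linear_combination (((-1) + 2 * p : ℂ) * (h π ξ) + ((-1) + p : ℂ) * (h (π ∘ ⇑(Equiv.swap (0:Fin 3) 1)) ξ) + (p : ℂ) * (h (π ∘ ⇑(Equiv.swap (1:Fin 3) 2)) ξ)) * hrel
    · exfalso; omega
    · exfalso; omega
    · simp only [h01, Nat.ne_of_lt h01, Nat.ne_of_gt h01, Nat.lt_asymm h01, h12, lt_self_iff_false, eq_self_iff_true, h02, Nat.ne_of_lt h02, Nat.ne_of_gt h02, Nat.lt_asymm h02, if_true, if_false, ite_true, ite_false, not_false_iff]
      linear_combination ((p : ℂ) * (h π ξ) + ((-1) + p : ℂ) * (h (π ∘ ⇑(Equiv.swap (0:Fin 3) 1)) ξ)) * hrel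
    · exfalso; omega
    · exfalso; omega
    · simp only [h01, Nat.ne_of_lt h01, Nat.ne_of_gt h01, Nat.lt_asymm h01, h12, Nat.ne_of_lt h12, Nat.ne_of_gt h12, Nat.lt_asymm h12, h02, Nat.ne_of_lt h02, Nat.ne_of_gt h02, Nat.lt_asymm h02, if_true, if_false, ite_true, ite_false, not_false_iff]
      linear_combination (((-1) + p : ℂ) * (h (π ∘ ⇑(Equiv.swap (0:Fin 3) 1)) ξ) + (1 + (-1) * p : ℂ) * (h (π ∘ ⇑(Equiv.swap (1:Fin 3) 2)) ξ)) * hrel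
end

section
/- Let σ, σ' ∈ S_N agree except that the positions of values i and j are interchanged (with i ≠ j), let ξ be such that ξ_i = ξ_j, and suppose the recursion h_{T_kτ}^π = h_τ^π + (1 + S(ξ_{τ(k)},ξ_{τ(k+1)}))·[α_k(π)·h_τ^{T_kπ} - β_k(π)·h_τ^π], with initial data h_e^π = δ_ν(π), consistently defines h_τ^π for all τ ∈ S_N. Then h_σ^π = h_{σ'}^π for every π. -/
/-- If σ and σ' agree except that the positions of the values i and j are
interchanged, and ξ_i = ξ_j, then h_σ^π = h_{σ'}^π for every π, where the h's
satisfy the multispecies ASEP recursion with initial data h_e^π = δ_ν(π). -/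
theorem stmt19 (N M : ℕ) (p q : ℂ) (hpq : p + q = 1)
    (ξ : Fin N → ℂ)
    (S : ℂ → ℂ → ℂ)
    (hS : ∀ x x', S x x' = -(p + q * x * x' - x) / (p + q * x * x' - x'))
    (hden : ∀ k ℓ : Fin N, p + q * ξ k * ξ ℓ - ξ ℓ ≠ 0)
    (α β : Fin N → Fin N → (Fin N → Fin M) → ℂ)
    (hα : ∀ a b ρ, α a b ρ = if ρ a = ρ b then 0 else if ρ a < ρ b then p else q)
    (hβ : ∀ a b ρ, β a b ρ = if ρ a = ρ b then 0 else if ρ a < ρ b then q else p)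
    (ν : Fin N → Fin M)
    (h : Equiv.Perm (Fin N) → (Fin N → Fin M) → ℂ)
    (hinit : ∀ π, h 1 π = if π = ν then 1 else 0)
    (hrec : ∀ (τ : Equiv.Perm (Fin N)) (π : Fin N → Fin M) (k k' : Fin N),
      (k' : ℕ) = (k : ℕ) + 1 →
      h (τ * Equiv.swap k k') π = h τ π
        + (1 + S (ξ (τ k)) (ξ (τ k'))) *
          (α k k' π * h τ (π ∘ Equiv.swap k k') - β k k' π * h τ π))
    (i j : Fin N) (hij : i ≠ j) (hξ : ξ i = ξ j)
    (σ σ' : Equiv.Perm (Fin N)) (hpair : σ' = Equiv.swap i j * σ) :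
    ∀ π : Fin N → Fin M, h σ π = h σ' π := by
  -- 1 + S x x = 0 when the denominator is nonzero
  have hSdiag : ∀ a : Fin N, 1 + S (ξ a) (ξ a) = 0 := by
    intro a
    rw [hS]
    have hd := hden a a
    field_simp
    rw [div_self (by rw [sq, ← mul_assoc]; exact hd)]; ring
  have key : ∀ n : ℕ, ∀ σ : Equiv.Perm (Fin N), ∀ i j : Fin N, i ≠ j → ξ i = ξ j →
      ((σ⁻¹ j : Fin N) : ℕ) = ((σ⁻¹ i : Fin N) : ℕ) + n + 1 →
      ∀ π, h σ π = h (Equiv.swap i j * σ) π := by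
    intro n
    induction n with
    | zero =>
      intro σ i j hij hξ hd π
      have hk' : ((σ⁻¹ j : Fin N) : ℕ) = ((σ⁻¹ i : Fin N) : ℕ) + 1 := by omega
      have hr := hrec σ π (σ⁻¹ i) (σ⁻¹ j) hk'
      rw [(show ∀ (f : Equiv.Perm (Fin N)) x, f (f⁻¹ x) = x from fun f x => f.apply_symm_apply x), (show ∀ (f : Equiv.Perm (Fin N)) x, f (f⁻¹ x) = x from fun f x => f.apply_symm_apply x)] at hr
      rw [Equiv.swap_mul_eq_mul_swap, hr, hξ, hSdiag, zero_mul, add_zero]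
    | succ n ih =>
      intro σ i j hij hξ hd π
      set a : Fin N := σ⁻¹ i with ha
      set b : Fin N := σ⁻¹ j with hb
      have haN : (a : ℕ) + 1 < N := by
        have := b.isLt; omega
      set k' : Fin N := ⟨(a : ℕ) + 1, haN⟩ with hk'def
      have hkk' : (k' : ℕ) = (a : ℕ) + 1 := rfl
      have hk'ne : k' ≠ a := by
        intro hcon
        have : (k' : ℕ) = (a : ℕ) := by rw [hcon]
        omega
      have hk'neb : k' ≠ b := by
        intro hcon
        have : (k' : ℕ) = (b : ℕ) := by rw [hcon]
        omega
      set τ : Equiv.Perm (Fin N) := σ * Equiv.swap a k' with hτ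
      have hτi : τ⁻¹ i = k' := by
        rw [hτ, mul_inv_rev, Equiv.swap_inv]
        simp only [Equiv.Perm.mul_apply, ← ha]
        exact Equiv.swap_apply_left a k'
      have hτj : τ⁻¹ j = b := by
        rw [hτ, mul_inv_rev, Equiv.swap_inv]
        simp only [Equiv.Perm.mul_apply, ← hb]
        have hba : b ≠ a := by
          intro hcon
          have : (b : ℕ) = (a : ℕ) := by rw [hcon]
          omega
        exact Equiv.swap_apply_of_ne_of_ne hba hk'neb.symm
      have hdist : ((τ⁻¹ j : Fin N) : ℕ) = ((τ⁻¹ i : Fin N) : ℕ) + n + 1 := by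
        rw [hτi, hτj]; omega
      -- σ = τ * swap a k', σ' = (swap i j * τ) * swap a k'
      have hστ : σ = τ * Equiv.swap a k' := by
        rw [hτ, mul_assoc, Equiv.swap_mul_self, mul_one]
      have hσ'τ : Equiv.swap i j * σ = (Equiv.swap i j * τ) * Equiv.swap a k' := by
        rw [hστ]; group
      -- values at the swapped positions
      have hτa : τ a = σ k' := by
        rw [hτ]; simp [Equiv.Perm.mul_apply, Equiv.swap_apply_left]
      have hτk' : τ k' = i := by
        rw [hτ]
        simp only [Equiv.Perm.mul_apply, Equiv.swap_apply_right]
        rw [ha, (show ∀ (f : Equiv.Perm (Fin N)) x, f (f⁻¹ x) = x from fun f x => f.apply_symm_apply x)]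
      have hσk'i : σ k' ≠ i := by
        intro hcon
        exact hk'ne (by rw [ha, ← hcon, (show ∀ (f : Equiv.Perm (Fin N)) x, f⁻¹ (f x) = x from fun f x => f.symm_apply_apply x)])
      have hσk'j : σ k' ≠ j := by
        intro hcon
        exact hk'neb (by rw [hb, ← hcon, (show ∀ (f : Equiv.Perm (Fin N)) x, f⁻¹ (f x) = x from fun f x => f.symm_apply_apply x)])
      have hτ'a : (Equiv.swap i j * τ) a = σ k' := by
        simp only [Equiv.Perm.mul_apply, hτa]
        exact Equiv.swap_apply_of_ne_of_ne hσk'i hσk'j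
      have hτ'k' : (Equiv.swap i j * τ) k' = j := by
        simp only [Equiv.Perm.mul_apply, hτk', Equiv.swap_apply_left]
      have hr1 := hrec τ π a k' hkk'
      have hr2 := hrec (Equiv.swap i j * τ) π a k' hkk'
      have ihτ1 := ih τ i j hij hξ hdist π
      have ihτ2 := ih τ i j hij hξ hdist (π ∘ Equiv.swap a k')
      rw [hσ'τ, hστ, hr1, hr2, hτa, hτk', hτ'a, hτ'k', ← hξ, ihτ1, ihτ2]
  intro π
  rcases lt_trichotomy ((σ⁻¹ i : Fin N) : ℕ) ((σ⁻¹ j : Fin N) : ℕ) with hlt | heq | hgt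
  · obtain ⟨n, hn⟩ : ∃ n, ((σ⁻¹ j : Fin N) : ℕ) = ((σ⁻¹ i : Fin N) : ℕ) + n + 1 :=
      ⟨(σ⁻¹ j : Fin N) - (σ⁻¹ i : Fin N) - 1, by omega⟩
    rw [hpair]
    exact key n σ i j hij hξ hn π
  · exfalso
    apply hij
    have : (σ⁻¹ i : Fin N) = σ⁻¹ j := Fin.ext heq
    have := congrArg σ this
    simpa using this
  · obtain ⟨n, hn⟩ : ∃ n, ((σ⁻¹ i : Fin N) : ℕ) = ((σ⁻¹ j : Fin N) : ℕ) + n + 1 :=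
      ⟨(σ⁻¹ i : Fin N) - (σ⁻¹ j : Fin N) - 1, by omega⟩
    rw [hpair, Equiv.swap_comm]
    exact key n σ j i hij.symm hξ.symm hn π
end
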